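/- Let d ∈ ℕ and let n⁰', n⁰ ∈ ℕ^p satisfy n⁰' ≥ n⁰ componentwise. Then for all n⁻, n⁺ ∈ ℕ^p, k_d(n⁻, n⁰', n⁺) ≤ k_d(n⁻, n⁰, n⁺): the BART sub-correlation function is monotonically non-increasing in the interior split counts. -/

import Mathlib

/-- Total weight `W(v) = Σ_{i : v_i ≠ 0} w_i` of the axes with at least one available split. -/
noncomputable def bartW (p : ℕ) (w : Fin p → ℝ) (v : Fin p → ℕ) : ℝ :=
  ∑ i ∈ Finset.univ.filter (fun i => v i ≠ 0), w i

/-- The BART sub-correlation function `k_d(n⁻, n⁰, n⁺)`, defined by well-founded recursion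
on `Σ_i (n⁻_i + n⁺_i)`. -/
noncomputable def bartK (p : ℕ) (w : Fin p → ℝ) (P : ℕ → ℝ)
    (d : ℕ) (nm n0 np : Fin p → ℕ) : ℝ :=
  if ∀ i, nm i + n0 i + np i = 0 then 1
  else
    1 - P d * (1 - (1 / bartW p w (fun i => nm i + n0 i + np i)) *
      ∑ i ∈ Finset.univ.filter (fun i => nm i + n0 i + np i ≠ 0),
        (w i / ((nm i + n0 i + np i : ℕ) : ℝ)) *
          ((∑ k ∈ (Finset.range (nm i)).attach,
              bartK p w P (d+1) (Function.update nm i k.1) n0 np) +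
           (∑ k ∈ (Finset.range (np i)).attach,
              bartK p w P (d+1) nm n0 (Function.update np i k.1))))
termination_by ∑ i, (nm i + np i)
decreasing_by
  · have hk : k.1 < nm i := Finset.mem_range.mp k.2
    refine Finset.sum_lt_sum (fun j _ => ?_) ⟨i, Finset.mem_univ i, ?_⟩
    · rcases eq_or_ne j i with rfl | hj
      · simp only [Function.update_self]; omega
      · simp only [Function.update_of_ne hj]; omega
    · simp only [Function.update_self]; omega
  · have hk : k.1 < np i := Finset.mem_range.mp k.2
    refine Finset.sum_lt_sum (fun j _ => ?_) ⟨i, Finset.mem_univ i, ?_⟩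
    · rcases eq_or_ne j i with rfl | hj
      · simp only [Function.update_self]; omega
      · simp only [Function.update_of_ne hj]; omega
    · simp only [Function.update_self]; omega

lemma bartW_pos {p : ℕ} {w : Fin p → ℝ} (hw : ∀ i, 0 < w i) {v : Fin p → ℕ}
    (h : ¬ ∀ i, v i = 0) : 0 < bartW p w v := by
  obtain ⟨i, hi⟩ := not_forall.mp h
  exact Finset.sum_pos (fun j _ => hw j)
    ⟨i, Finset.mem_filter.mpr ⟨Finset.mem_univ i, hi⟩⟩

lemma sum_update_lt_m {p : ℕ} (nm np : Fin p → ℕ) {i : Fin p} {k : ℕ} (hk : k < nm i) :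
    (∑ j, (Function.update nm i k j + np j)) < ∑ j, (nm j + np j) := by
  refine Finset.sum_lt_sum (fun j _ => ?_) ⟨i, Finset.mem_univ i, ?_⟩
  · rcases eq_or_ne j i with rfl | hj
    · simp only [Function.update_self]; omega
    · simp only [Function.update_of_ne hj]; omega
  · simp only [Function.update_self]; omega

lemma sum_update_lt_p {p : ℕ} (nm np : Fin p → ℕ) {i : Fin p} {k : ℕ} (hk : k < np i) :
    (∑ j, (nm j + Function.update np i k j)) < ∑ j, (nm j + np j) := by
  refine Finset.sum_lt_sum (fun j _ => ?_) ⟨i, Finset.mem_univ i, ?_⟩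
  · rcases eq_or_ne j i with rfl | hj
    · simp only [Function.update_self]; omega
    · simp only [Function.update_of_ne hj]; omega
  · simp only [Function.update_self]; omega

lemma bartK_bounds {p : ℕ} {w : Fin p → ℝ} (hw : ∀ i, 0 < w i)
    {P : ℕ → ℝ} (hP : ∀ d, P d ∈ Set.Icc (0:ℝ) 1) :
    ∀ N d nm n0 np, (∑ i, (nm i + np i)) = N →
      0 ≤ bartK p w P d nm n0 np ∧ bartK p w P d nm n0 np ≤ 1 := by
  intro N
  induction N using Nat.strong_induction_on with
  | _ N IH =>
  intro d nm n0 np hN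
  rw [bartK]
  by_cases h : ∀ i, nm i + n0 i + np i = 0
  · rw [if_pos h]; exact ⟨zero_le_one, le_refl 1⟩
  rw [if_neg h]
  have hW : 0 < bartW p w (fun i => nm i + n0 i + np i) := bartW_pos hw h
  set s := Finset.univ.filter (fun i : Fin p => nm i + n0 i + np i ≠ 0) with hs
  set f := fun i : Fin p => (w i / ((nm i + n0 i + np i : ℕ) : ℝ)) *
      ((∑ k ∈ (Finset.range (nm i)).attach,
          bartK p w P (d+1) (Function.update nm i k.1) n0 np) +
       (∑ k ∈ (Finset.range (np i)).attach,
          bartK p w P (d+1) nm n0 (Function.update np i k.1))) with hf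
  have key : ∀ i ∈ s, 0 ≤ f i ∧ f i ≤ w i := by
    intro i hi
    have hni : nm i + n0 i + np i ≠ 0 := (Finset.mem_filter.mp hi).2
    have hnpos : (0:ℝ) < ((nm i + n0 i + np i : ℕ) : ℝ) := by
      exact_mod_cast Nat.pos_of_ne_zero hni
    have hA : ∀ k ∈ (Finset.range (nm i)).attach,
        0 ≤ bartK p w P (d+1) (Function.update nm i k.1) n0 np ∧
        bartK p w P (d+1) (Function.update nm i k.1) n0 np ≤ 1 := by
      intro k _
      exact IH _ (hN ▸ sum_update_lt_m nm np (Finset.mem_range.mp k.2)) _ _ _ _ rfl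
    have hB : ∀ k ∈ (Finset.range (np i)).attach,
        0 ≤ bartK p w P (d+1) nm n0 (Function.update np i k.1) ∧
        bartK p w P (d+1) nm n0 (Function.update np i k.1) ≤ 1 := by
      intro k _
      exact IH _ (hN ▸ sum_update_lt_p nm np (Finset.mem_range.mp k.2)) _ _ _ _ rfl
    have hA0 : 0 ≤ ∑ k ∈ (Finset.range (nm i)).attach,
        bartK p w P (d+1) (Function.update nm i k.1) n0 np :=
      Finset.sum_nonneg (fun k hk => (hA k hk).1)
    have hB0 : 0 ≤ ∑ k ∈ (Finset.range (np i)).attach,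
        bartK p w P (d+1) nm n0 (Function.update np i k.1) :=
      Finset.sum_nonneg (fun k hk => (hB k hk).1)
    have hA1 : (∑ k ∈ (Finset.range (nm i)).attach,
        bartK p w P (d+1) (Function.update nm i k.1) n0 np) ≤ (nm i : ℝ) := by
      calc _ ≤ ∑ _k ∈ (Finset.range (nm i)).attach, (1:ℝ) :=
            Finset.sum_le_sum (fun k hk => (hA k hk).2)
        _ = (nm i : ℝ) := by simp
    have hB1 : (∑ k ∈ (Finset.range (np i)).attach,
        bartK p w P (d+1) nm n0 (Function.update np i k.1)) ≤ (np i : ℝ) := by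
      calc _ ≤ ∑ _k ∈ (Finset.range (np i)).attach, (1:ℝ) :=
            Finset.sum_le_sum (fun k hk => (hB k hk).2)
        _ = (np i : ℝ) := by simp
    constructor
    · exact mul_nonneg (div_nonneg (hw i).le hnpos.le) (add_nonneg hA0 hB0)
    · have hsum : (∑ k ∈ (Finset.range (nm i)).attach,
          bartK p w P (d+1) (Function.update nm i k.1) n0 np) +
          (∑ k ∈ (Finset.range (np i)).attach,
          bartK p w P (d+1) nm n0 (Function.update np i k.1)) ≤
          ((nm i + n0 i + np i : ℕ) : ℝ) := by
        push_cast
        have hc : (0:ℝ) ≤ (n0 i : ℝ) := Nat.cast_nonneg _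
        linarith
      calc f i ≤ (w i / ((nm i + n0 i + np i : ℕ) : ℝ)) * ((nm i + n0 i + np i : ℕ) : ℝ) :=
            mul_le_mul_of_nonneg_left hsum (div_nonneg (hw i).le hnpos.le)
        _ = w i := div_mul_cancel₀ _ hnpos.ne'
  have hS0 : 0 ≤ ∑ i ∈ s, f i := Finset.sum_nonneg (fun i hi => (key i hi).1)
  have hSW : ∑ i ∈ s, f i ≤ bartW p w (fun i => nm i + n0 i + np i) :=
    Finset.sum_le_sum (fun i hi => (key i hi).2)
  obtain ⟨hP0, hP1⟩ := hP d
  have hQ1 : (1 / bartW p w (fun i => nm i + n0 i + np i)) * ∑ i ∈ s, f i ≤ 1 := by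
    rw [one_div, inv_mul_le_iff₀ hW, mul_one]; exact hSW
  have hQ0 : 0 ≤ (1 / bartW p w (fun i => nm i + n0 i + np i)) * ∑ i ∈ s, f i :=
    mul_nonneg (by positivity) hS0
  constructor
  · nlinarith
  · nlinarith

lemma bartK_anti_aux {p : ℕ} {w : Fin p → ℝ} (hw : ∀ i, 0 < w i)
    {P : ℕ → ℝ} (hP : ∀ d, P d ∈ Set.Icc (0:ℝ) 1) :
    ∀ N d (n0' n0 : Fin p → ℕ), (∀ i, n0 i ≤ n0' i) → ∀ nm np,
      (∑ i, (nm i + np i)) = N →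
      bartK p w P d nm n0' np ≤ bartK p w P d nm n0 np := by
  intro N
  induction N using Nat.strong_induction_on with
  | _ N IH =>
  intro d n0' n0 h0 nm np hN
  by_cases h : ∀ i, nm i + n0 i + np i = 0
  · have hr : bartK p w P d nm n0 np = 1 := by rw [bartK, if_pos h]
    rw [hr]
    exact (bartK_bounds hw hP N d nm n0' np hN).2
  have h' : ¬ ∀ i, nm i + n0' i + np i = 0 := by
    intro h'; exact h (fun i => by have := h' i; have := h0 i; omega)
  conv_lhs => rw [bartK]
  conv_rhs => rw [bartK]
  rw [if_neg h', if_neg h]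
  obtain ⟨hP0, hP1⟩ := hP d
  set s := Finset.univ.filter (fun i : Fin p => nm i + n0 i + np i ≠ 0) with hs
  set s' := Finset.univ.filter (fun i : Fin p => nm i + n0' i + np i ≠ 0) with hs'
  have hsub : s ⊆ s' := by
    intro i hi
    simp only [hs, hs', Finset.mem_filter, Finset.mem_univ, true_and] at *
    have := h0 i; omega
  have hW : 0 < bartW p w (fun i => nm i + n0 i + np i) := bartW_pos hw h
  have hW' : 0 < bartW p w (fun i => nm i + n0' i + np i) := bartW_pos hw h'
  have hWW' : bartW p w (fun i => nm i + n0 i + np i) ≤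
      bartW p w (fun i => nm i + n0' i + np i) :=
    Finset.sum_le_sum_of_subset_of_nonneg hsub (fun i _ _ => (hw i).le)
  set f' := fun i : Fin p => (w i / ((nm i + n0' i + np i : ℕ) : ℝ)) *
      ((∑ k ∈ (Finset.range (nm i)).attach,
          bartK p w P (d+1) (Function.update nm i k.1) n0' np) +
       (∑ k ∈ (Finset.range (np i)).attach,
          bartK p w P (d+1) nm n0' (Function.update np i k.1))) with hf'
  set f := fun i : Fin p => (w i / ((nm i + n0 i + np i : ℕ) : ℝ)) *
      ((∑ k ∈ (Finset.range (nm i)).attach,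
          bartK p w P (d+1) (Function.update nm i k.1) n0 np) +
       (∑ k ∈ (Finset.range (np i)).attach,
          bartK p w P (d+1) nm n0 (Function.update np i k.1))) with hf
  have hS'eq : ∑ i ∈ s', f' i = ∑ i ∈ s, f' i := by
    refine (Finset.sum_subset hsub (fun i _ hi => ?_)).symm
    simp only [hs, Finset.mem_filter, Finset.mem_univ, true_and, not_not] at hi
    have hm : nm i = 0 := by omega
    have hpp : np i = 0 := by omega
    simp only [hf']
    rw [hm, hpp]
    simp
  have hterm : ∀ i ∈ s, 0 ≤ f' i ∧ f' i ≤ f i := by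
    intro i hi
    have hni : nm i + n0 i + np i ≠ 0 := by
      simpa [hs] using hi
    have hnpos : (0:ℝ) < ((nm i + n0 i + np i : ℕ) : ℝ) := by
      exact_mod_cast Nat.pos_of_ne_zero hni
    have hnpos' : (0:ℝ) < ((nm i + n0' i + np i : ℕ) : ℝ) := by
      have := h0 i
      exact_mod_cast Nat.pos_of_ne_zero (by omega)
    have hnle : ((nm i + n0 i + np i : ℕ) : ℝ) ≤ ((nm i + n0' i + np i : ℕ) : ℝ) := by
      have := h0 i; exact_mod_cast by omega
    have hA' : ∀ k ∈ (Finset.range (nm i)).attach,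
        0 ≤ bartK p w P (d+1) (Function.update nm i k.1) n0' np :=
      fun k _ => (bartK_bounds hw hP _ _ _ _ _ rfl).1
    have hB' : ∀ k ∈ (Finset.range (np i)).attach,
        0 ≤ bartK p w P (d+1) nm n0' (Function.update np i k.1) :=
      fun k _ => (bartK_bounds hw hP _ _ _ _ _ rfl).1
    have hA0 : 0 ≤ ∑ k ∈ (Finset.range (nm i)).attach,
        bartK p w P (d+1) (Function.update nm i k.1) n0' np :=
      Finset.sum_nonneg hA'
    have hB0 : 0 ≤ ∑ k ∈ (Finset.range (np i)).attach,
        bartK p w P (d+1) nm n0' (Function.update np i k.1) :=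
      Finset.sum_nonneg hB'
    have hAle : (∑ k ∈ (Finset.range (nm i)).attach,
        bartK p w P (d+1) (Function.update nm i k.1) n0' np) ≤
        ∑ k ∈ (Finset.range (nm i)).attach,
        bartK p w P (d+1) (Function.update nm i k.1) n0 np :=
      Finset.sum_le_sum (fun k _ =>
        IH _ (hN ▸ sum_update_lt_m nm np (Finset.mem_range.mp k.2)) _ _ _ h0 _ _ rfl)
    have hBle : (∑ k ∈ (Finset.range (np i)).attach,
        bartK p w P (d+1) nm n0' (Function.update np i k.1)) ≤
        ∑ k ∈ (Finset.range (np i)).attach,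
        bartK p w P (d+1) nm n0 (Function.update np i k.1) :=
      Finset.sum_le_sum (fun k _ =>
        IH _ (hN ▸ sum_update_lt_p nm np (Finset.mem_range.mp k.2)) _ _ _ h0 _ _ rfl)
    have hdiv : w i / ((nm i + n0' i + np i : ℕ) : ℝ) ≤
        w i / ((nm i + n0 i + np i : ℕ) : ℝ) :=
      div_le_div_of_nonneg_left (hw i).le hnpos hnle
    constructor
    · exact mul_nonneg (div_nonneg (hw i).le hnpos'.le) (add_nonneg hA0 hB0)
    · calc f' i ≤ (w i / ((nm i + n0 i + np i : ℕ) : ℝ)) *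
            ((∑ k ∈ (Finset.range (nm i)).attach,
                bartK p w P (d+1) (Function.update nm i k.1) n0' np) +
             (∑ k ∈ (Finset.range (np i)).attach,
                bartK p w P (d+1) nm n0' (Function.update np i k.1))) :=
            mul_le_mul_of_nonneg_right hdiv (add_nonneg hA0 hB0)
        _ ≤ f i := mul_le_mul_of_nonneg_left (add_le_add hAle hBle)
            (div_nonneg (hw i).le hnpos.le)
  have hS'0 : 0 ≤ ∑ i ∈ s, f' i := Finset.sum_nonneg (fun i hi => (hterm i hi).1)
  have hS'S : ∑ i ∈ s, f' i ≤ ∑ i ∈ s, f i :=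
    Finset.sum_le_sum (fun i hi => (hterm i hi).2)
  have hfin : (1 / bartW p w (fun i => nm i + n0' i + np i)) * ∑ i ∈ s', f' i ≤
      (1 / bartW p w (fun i => nm i + n0 i + np i)) * ∑ i ∈ s, f i := by
    rw [hS'eq]
    calc (1 / bartW p w (fun i => nm i + n0' i + np i)) * ∑ i ∈ s, f' i ≤
        (1 / bartW p w (fun i => nm i + n0 i + np i)) * ∑ i ∈ s, f' i :=
          mul_le_mul_of_nonneg_right (one_div_le_one_div_of_le hW hWW') hS'0
      _ ≤ _ := mul_le_mul_of_nonneg_left hS'S (by positivity)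
  have hmul : P d * (1 - (1 / bartW p w (fun i => nm i + n0 i + np i)) * ∑ i ∈ s, f i) ≤
      P d * (1 - (1 / bartW p w (fun i => nm i + n0' i + np i)) * ∑ i ∈ s', f' i) :=
    mul_le_mul_of_nonneg_left (by linarith) hP0
  linarith

/-- Property 7 of Theorem 2: `k_d` is monotonically non-increasing in the interior
split counts `n⁰`. -/
theorem bartK_antitone_interior
    (p : ℕ) (hp : 1 ≤ p) (w : Fin p → ℝ) (hw : ∀ i, 0 < w i)
    (P : ℕ → ℝ) (hP : ∀ d, P d ∈ Set.Icc (0 : ℝ) 1)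
    (d : ℕ) (n0' n0 : Fin p → ℕ) (h0 : ∀ i, n0 i ≤ n0' i) (nm np : Fin p → ℕ) :
    bartK p w P d nm n0' np ≤ bartK p w P d nm n0 np := by
  exact bartK_anti_aux hw hP _ d n0' n0 h0 nm np rfl
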